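/- arXiv:1903.03520 — 4 statements merged into one kernel-verified Lean document; each statement's English description precedes it below -/
import Mathlib

section
/- Let Σ = {0,1,…,m} with the metric d(a,b) = |a−b|, let α ≥ m ≥ 2, let k be a positive integer, and for a letter c ∈ {1,…,m−1} define Z(c) = 0^α ∘ (1,2,…,c−1) ∘ c^α ∘ (c+1,…,m−1) ∘ m^α. For x ∈ {1,…,m−1}^k let A(x) = Z(x₁)∘⋯∘Z(x_k); let [0,m] denote the string (0,1,…,m) and Y(y) = (0,1,…,y−1, y+1,…,m), and let B(i) = [0,m]^{i−1} ∘ Y(y_i) ∘ [0,m]^{k−i}. If x_i ≠ y_i, then dtw(A(x), B(i)) ≤ 1. -/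
/-- `xb` is an expansion of `x`: each letter of `x` is duplicated in place a positive
number of times. -/
def IsExpansion {α : Type*} (x xb : List α) : Prop :=
  ∃ ks : List ℕ, ks.length = x.length ∧ (∀ k ∈ ks, 0 < k) ∧
    xb = (List.zipWith (fun a k => List.replicate k a) x ks).flatten

/-- `(xb, yb)` is a correspondence between `x` and `y`: a pair of equal-length expansions. -/
def IsCorrespondence {α : Type*} (x y xb yb : List α) : Prop :=
  IsExpansion x xb ∧ IsExpansion y yb ∧ xb.length = yb.length

/-- The cost of a correspondence: summed distances of aligned letters. -/
noncomputable def corrCost {α : Type*} (δ : α → α → ℝ) (xb yb : List α) : ℝ :=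
  (List.zipWith δ xb yb).sum

/-- Dynamic time warping distance with respect to a distance function `δ`. -/
noncomputable def dtw {α : Type*} (δ : α → α → ℝ) (x y : List α) : ℝ :=
  sInf {c | ∃ xb yb, IsCorrespondence x y xb yb ∧ c = corrCost δ xb yb}

/-- Generalized Hamming distance on letters. -/
noncomputable def hamDist {α : Type*} [DecidableEq α] (a b : α) : ℝ := if a = b then 0 else 1

/-- DTW over generalized Hamming space. -/
noncomputable def dtw0 {α : Type*} [DecidableEq α] (x y : List α) : ℝ := dtw hamDist x y

/-- Z(c) = 0^α ∘ (1,…,c−1) ∘ c^α ∘ (c+1,…,m−1) ∘ m^α, for a letter 1 ≤ c ≤ m−1. -/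
def Zint (m a : ℕ) (c : ℤ) : List ℤ :=
  List.replicate a 0 ++ ((List.range (c - 1).toNat).map fun t => (t : ℤ) + 1) ++
    List.replicate a c ++ ((List.range (m - 1 - c.toNat)).map fun t => c + 1 + (t : ℤ)) ++
    List.replicate a (m : ℤ)

/-- A(x) = Z(x₁) ∘ ⋯ ∘ Z(x_k). -/
def Aint (m a k : ℕ) (x : Fin k → ℤ) : List ℤ :=
  (List.ofFn fun j => Zint m a (x j)).flatten

/-- The full block [0, m] = (0, 1, …, m). -/
def fullBlock (m : ℕ) : List ℤ :=
  (List.range (m + 1)).map fun t => (t : ℤ)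

/-- Y(y) = (0, 1, …, y−1, y+1, …, m). -/
def Yint (m : ℕ) (y : ℤ) : List ℤ :=
  ((List.range (m + 1)).map fun t => (t : ℤ)).filter (fun t => t != y)

/-- B(i) = [0,m]^{i−1} ∘ Y(y_i) ∘ [0,m]^{k−i} (i zero-indexed here). -/
def Bint (m k : ℕ) (i : Fin k) (yv : ℤ) : List ℤ :=
  (List.replicate (i : ℕ) (fullBlock m)).flatten ++ Yint m yv ++
    (List.replicate (k - 1 - (i : ℕ)) (fullBlock m)).flatten

/-! ### Auxiliary lemmas -/

section Aux

lemma flatten_zip_ones {α : Type*} (l : List α) :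
    (List.zipWith (fun a k => List.replicate k a) l (List.replicate l.length 1)).flatten = l := by
  induction l with
  | nil => simp
  | cons a t ih => simp [List.replicate_succ, ih]

lemma isExpansion_refl {α : Type*} (l : List α) : IsExpansion l l :=
  ⟨List.replicate l.length 1, by simp, by simp, (flatten_zip_ones l).symm⟩

lemma isExpansion_single {α : Type*} (v : α) (n : ℕ) (hn : 0 < n) :
    IsExpansion [v] (List.replicate n v) :=
  ⟨[n], by simp, by simpa using hn, by simp⟩

lemma isExpansion_append {α : Type*} {x y xb yb : List α}
    (hx : IsExpansion x xb) (hy : IsExpansion y yb) : IsExpansion (x ++ y) (xb ++ yb) := by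
  obtain ⟨ks, hl, hp, he⟩ := hx
  obtain ⟨ks', hl', hp', he'⟩ := hy
  refine ⟨ks ++ ks', by simp [hl, hl'], ?_, ?_⟩
  · intro k hk
    rcases List.mem_append.1 hk with h | h
    exacts [hp k h, hp' k h]
  · rw [List.zipWith_append hl.symm, List.flatten_append, he, he']

lemma isExpansion_cons_dup {α : Type*} {u t : List α} {w : α} (h : IsExpansion u (w :: t)) :
    IsExpansion u (w :: w :: t) := by
  obtain ⟨ks, hl, hp, he⟩ := h
  cases u with
  | nil =>
    have : ks = [] := List.length_eq_zero_iff.mp (by simpa using hl)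
    subst this; simp at he
  | cons u₀ u' =>
    cases ks with
    | nil => simp at hl
    | cons k₀ ks' =>
      have hk₀ : 0 < k₀ := hp _ List.mem_cons_self
      obtain ⟨k, rfl⟩ : ∃ k, k₀ = k + 1 := ⟨k₀ - 1, by omega⟩
      simp only [List.zipWith_cons_cons, List.flatten_cons, List.replicate_succ,
        List.cons_append, List.cons.injEq] at he
      obtain ⟨rfl, he⟩ := he
      refine ⟨(k + 2) :: ks', by simpa using hl, ?_, ?_⟩
      · intro j hj
        rcases List.mem_cons.1 hj with rfl | hj
        · omega
        · exact hp _ (List.mem_cons_of_mem _ hj)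
      · simp only [List.zipWith_cons_cons, List.flatten_cons, List.replicate_succ,
          List.cons_append, List.cons.injEq]
        exact ⟨trivial, trivial, he⟩

lemma isExpansion_flatten {α : Type*} {L1 L2 : List (List α)}
    (h : List.Forall₂ IsExpansion L1 L2) : IsExpansion L1.flatten L2.flatten := by
  induction h with
  | nil => exact ⟨[], rfl, by simp, rfl⟩
  | cons h _ ih => simpa using isExpansion_append h ih

lemma forall₂_ofFn {α β : Type*} {R : α → β → Prop} :
    ∀ {k : ℕ} {f : Fin k → α} {g : Fin k → β},
      (∀ j, R (f j) (g j)) → List.Forall₂ R (List.ofFn f) (List.ofFn g) := by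
  intro k
  induction k with
  | zero => intro f g _; simp [List.ofFn_zero]
  | succ n ih =>
    intro f g h
    rw [List.ofFn_succ, List.ofFn_succ]
    exact List.Forall₂.cons (h 0) (ih fun j => h j.succ)

lemma zipWith_ofFn {α β γ : Type*} (f : α → β → γ) :
    ∀ {k : ℕ} (F : Fin k → α) (G : Fin k → β),
      List.zipWith f (List.ofFn F) (List.ofFn G) = List.ofFn fun j => f (F j) (G j) := by
  intro k
  induction k with
  | zero => intro F G; simp
  | succ n ih =>
    intro F G
    rw [List.ofFn_succ, List.ofFn_succ, List.ofFn_succ, List.zipWith_cons_cons, ih]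

lemma ofFn_ite {β : Type*} : ∀ (k : ℕ) (i : Fin k) (a b : β),
    List.ofFn (fun j => if j = i then b else a) =
      List.replicate (i : ℕ) a ++ b :: List.replicate (k - 1 - (i : ℕ)) a := by
  intro k
  induction k with
  | zero => exact fun i => i.elim0
  | succ n ih =>
    intro i a b
    induction i using Fin.cases with
    | zero =>
      rw [List.ofFn_succ]
      have h1 : (fun j : Fin n => if j.succ = (0 : Fin (n+1)) then b else a) = fun _ => a := by
        funext j; simp [Fin.succ_ne_zero]
      simp [h1, List.ofFn_const]
    | succ i₀ =>
      rw [List.ofFn_succ]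
      have h1 : (fun j : Fin n => if j.succ = i₀.succ then b else a) =
          fun j => if j = i₀ then b else a := by
        funext j; simp [Fin.succ_inj]
      have h0 : ((0 : Fin (n+1)) = i₀.succ) = False := by
        simp [(Fin.succ_ne_zero i₀).symm]
      rw [h1, ih i₀ a b]
      simp only [h0, if_false]
      have : ((i₀.succ : Fin (n+1)) : ℕ) = (i₀ : ℕ) + 1 := rfl
      rw [this]
      simp [List.replicate_succ]
      omega

lemma zip_dist_self (l : List ℤ) : (List.zipWith (dist : ℤ → ℤ → ℝ) l l).sum = 0 := by
  induction l with
  | nil => simp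
  | cons a t ih => simp [ih]

lemma zip_dist_nonneg : ∀ (l l' : List ℤ), 0 ≤ (List.zipWith (dist : ℤ → ℤ → ℝ) l l').sum := by
  intro l
  induction l with
  | nil => intro l'; simp
  | cons a t ih =>
    intro l'
    cases l' with
    | nil => simp
    | cons b t' =>
      simp only [List.zipWith_cons_cons, List.sum_cons]
      have := ih t'
      have := dist_nonneg (x := a) (y := b)
      linarith

lemma flatten_length_eq {α β : Type*} {L1 : List (List α)} {L2 : List (List β)}
    (h : List.Forall₂ (fun u v => u.length = v.length) L1 L2) :
    L1.flatten.length = L2.flatten.length := by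
  induction h with
  | nil => rfl
  | cons h _ ih => simp [h, ih]

lemma zip_sum_flatten {L1 L2 : List (List ℤ)}
    (h : List.Forall₂ (fun u v => u.length = v.length) L1 L2) :
    (List.zipWith (dist : ℤ → ℤ → ℝ) L1.flatten L2.flatten).sum =
      (List.zipWith (fun u v => (List.zipWith (dist : ℤ → ℤ → ℝ) u v).sum) L1 L2).sum := by
  induction h with
  | nil => simp
  | cons h _ ih =>
    simp only [List.flatten_cons, List.zipWith_cons_cons, List.sum_cons,
      List.zipWith_append h, List.sum_append, ih]

lemma dtw_dist_le {x y xb yb : List ℤ} (h : IsCorrespondence x y xb yb) :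
    dtw dist x y ≤ corrCost dist xb yb := by
  apply csInf_le
  · refine ⟨0, ?_⟩
    rintro c ⟨xb', yb', _, rfl⟩
    exact zip_dist_nonneg _ _
  · exact ⟨xb, yb, h, rfl⟩

/-! ### Ramps -/

def ramp (s n : ℕ) : List ℤ := (List.range n).map fun t : ℕ => (s : ℤ) + t

lemma ramp_one (s : ℕ) : ramp s 1 = [(s : ℤ)] := by simp [ramp, List.range_succ]

lemma ramp_add (s n₁ n₂ : ℕ) : ramp s (n₁ + n₂) = ramp s n₁ ++ ramp (s + n₁) n₂ := by
  simp only [ramp, List.range_add, List.map_append, List.map_map]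
  congr 1
  apply List.map_congr_left
  intro t _
  simp only [Function.comp_apply]
  push_cast
  ring

lemma ramp_split (s : ℕ) {n n₁ n₂ : ℕ} (h : n = n₁ + n₂) :
    ramp s n = ramp s n₁ ++ ramp (s + n₁) n₂ := by subst h; exact ramp_add s n₁ n₂

lemma ramp_split' (s n n₁ n₂ s₂ : ℕ) (h : n = n₁ + n₂) (hs : s₂ = s + n₁) :
    ramp s n = ramp s n₁ ++ ramp s₂ n₂ := by subst hs; exact ramp_split s h

lemma ramp_succ (s n : ℕ) : ramp s (n + 1) = (s : ℤ) :: ramp (s + 1) n := by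
  rw [ramp_split s (show n + 1 = 1 + n by omega), ramp_one]; rfl

lemma mem_ramp {v : ℤ} {s n : ℕ} (h : v ∈ ramp s n) : (s : ℤ) ≤ v ∧ v < (s : ℤ) + n := by
  simp only [ramp, List.mem_map, List.mem_range] at h
  obtain ⟨t, ht, rfl⟩ := h
  constructor <;> (try push_cast) <;> omega

lemma coe_range (n : ℕ) :
    ((List.range n : List ℕ) : List ℤ) = (List.range n).map (Nat.cast : ℕ → ℤ) := by
  simp only [bind_pure_comp, List.map_eq_map]

lemma map_coe_ramp (f : ℤ → ℤ) (n : ℕ) (s : ℕ) (hf : ∀ t : ℕ, t < n → f t = (s : ℤ) + t) :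
    List.map f ((List.range n : List ℕ) : List ℤ) = ramp s n := by
  rw [coe_range, List.map_map, ramp]
  apply List.map_congr_left
  intro t ht
  exact hf t (List.mem_range.mp ht)

lemma Zint_eq (m a : ℕ) (c : ℤ) (h1 : 1 ≤ c) :
    Zint m a c = List.replicate a 0 ++ ramp 1 (c.toNat - 1) ++ List.replicate a c ++
      ramp (c.toNat + 1) (m - 1 - c.toNat) ++ List.replicate a (m : ℤ) := by
  have hc : ((c.toNat : ℕ) : ℤ) = c := Int.toNat_of_nonneg (by omega)
  have e1 : List.map (fun t : ℤ => t + 1) ((List.range (c - 1).toNat : List ℕ) : List ℤ) =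
      ramp 1 (c.toNat - 1) := by
    rw [show (c - 1).toNat = c.toNat - 1 by omega]
    apply map_coe_ramp
    intro t _
    push_cast
    ring
  have e2 : List.map (fun t : ℤ => c + 1 + t) ((List.range (m - 1 - c.toNat) : List ℕ) : List ℤ) =
      ramp (c.toNat + 1) (m - 1 - c.toNat) := by
    apply map_coe_ramp
    intro t _
    push_cast [hc]
    ring
  show List.replicate a 0 ++ List.map (fun t : ℤ => t + 1) _ ++ _ ++
    List.map (fun t : ℤ => c + 1 + t) _ ++ _ = _
  rw [e1, e2]

lemma fullBlock_eq (m : ℕ) : fullBlock m = ramp 0 (m + 1) := by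
  show List.map (fun t : ℤ => t) _ = _
  apply map_coe_ramp
  intro t _
  omega

lemma Yint_eq (m : ℕ) (yv : ℤ) (h1 : 1 ≤ yv) (h2 : yv ≤ (m : ℤ) - 1) :
    Yint m yv = ramp 0 yv.toNat ++ ramp (yv.toNat + 1) (m - yv.toNat) := by
  have hc : ((yv.toNat : ℕ) : ℤ) = yv := Int.toNat_of_nonneg (by omega)
  have hfb : ((List.range (m + 1)).map fun t => (t : ℤ)) = ramp 0 (m + 1) := fullBlock_eq m
  rw [Yint, hfb, ramp_split 0 (show m + 1 = yv.toNat + (1 + (m - yv.toNat)) by omega)]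
  rw [ramp_split (0 + yv.toNat) (show 1 + (m - yv.toNat) = 1 + (m - yv.toNat) from rfl), ramp_one]
  simp only [Nat.zero_add, List.filter_append]
  have f1 : (ramp 0 yv.toNat).filter (fun t => t != yv) = ramp 0 yv.toNat := by
    rw [List.filter_eq_self]
    intro v hv
    have := mem_ramp hv
    simp only [bne_iff_ne, ne_eq]
    omega
  have f2 : ([((yv.toNat : ℕ) : ℤ)].filter (fun t => t != yv)) = [] := by
    simp [hc]
  have f3 : (ramp (yv.toNat + 1) (m - yv.toNat)).filter (fun t => t != yv) =
      ramp (yv.toNat + 1) (m - yv.toNat) := by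
    rw [List.filter_eq_self]
    intro v hv
    have := mem_ramp hv
    simp only [bne_iff_ne, ne_eq]
    push_cast at this
    omega
  rw [f1, f2, f3]
  simp

lemma fullBlock_decomp (m : ℕ) (c : ℤ) (h1 : 1 ≤ c) (h2 : c ≤ (m : ℤ) - 1) :
    fullBlock m = [(0 : ℤ)] ++ ramp 1 (c.toNat - 1) ++ [c] ++
      ramp (c.toNat + 1) (m - 1 - c.toNat) ++ [(m : ℤ)] := by
  have hc : ((c.toNat : ℕ) : ℤ) = c := Int.toNat_of_nonneg (by omega)
  have hcm : c.toNat ≤ m - 1 := by omega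
  have hc1 : 1 ≤ c.toNat := by omega
  rw [fullBlock_eq,
    ramp_split' 0 (m + 1) 1 ((c.toNat - 1) + (1 + ((m - 1 - c.toNat) + 1))) 1 (by omega) (by omega),
    ramp_split' 1 _ (c.toNat - 1) (1 + ((m - 1 - c.toNat) + 1)) c.toNat (by omega) (by omega),
    ramp_split' c.toNat _ 1 ((m - 1 - c.toNat) + 1) (c.toNat + 1) (by omega) (by omega),
    ramp_split' (c.toNat + 1) _ (m - 1 - c.toNat) 1 m (by omega) (by omega),
    ramp_one, ramp_one, ramp_one]
  simp [List.append_assoc, hc]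

lemma isExpansion_fullBlock (m a : ℕ) (ha : 0 < a) (c : ℤ) (h1 : 1 ≤ c) (h2 : c ≤ (m : ℤ) - 1) :
    IsExpansion (fullBlock m) (Zint m a c) := by
  rw [Zint_eq m a c h1, fullBlock_decomp m c h1 h2]
  exact isExpansion_append (isExpansion_append (isExpansion_append
    (isExpansion_append (isExpansion_single 0 a ha) (isExpansion_refl _))
    (isExpansion_single c a ha)) (isExpansion_refl _)) (isExpansion_single _ a ha)

end Aux

/-! ### The key single-block lemma -/

lemma block_key (m a : ℕ) (hm : 2 ≤ m) (ha : 0 < a) (c yv : ℤ)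
    (hc1 : 1 ≤ c) (hc2 : c ≤ (m : ℤ) - 1) (hy1 : 1 ≤ yv) (hy2 : yv ≤ (m : ℤ) - 1)
    (hne : c ≠ yv) :
    ∃ P R : List ℤ, Zint m a c = P ++ yv :: R ∧
      IsExpansion (Yint m yv) (P ++ (yv + 1) :: R) := by
  obtain ⟨a', rfl⟩ : ∃ a', a = a' + 1 := ⟨a - 1, by omega⟩
  set a := a' + 1 with hadef
  have hc : ((c.toNat : ℕ) : ℤ) = c := Int.toNat_of_nonneg (by omega)
  have hy : ((yv.toNat : ℕ) : ℤ) = yv := Int.toNat_of_nonneg (by omega)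
  rcases hne.lt_or_gt with hlt | hlt
  · -- c < yv
    refine ⟨List.replicate a 0 ++ (ramp 1 (c.toNat - 1) ++ (List.replicate a c ++
        ramp (c.toNat + 1) (yv.toNat - 1 - c.toNat))),
      ramp (yv.toNat + 1) (m - 1 - yv.toNat) ++ List.replicate a (m : ℤ), ?_, ?_⟩
    · rw [Zint_eq m a c hc1,
        ramp_split' (c.toNat + 1) (m - 1 - c.toNat) (yv.toNat - 1 - c.toNat)
          (1 + (m - 1 - yv.toNat)) yv.toNat (by omega) (by omega),
        ramp_split' yv.toNat _ 1 (m - 1 - yv.toNat) (yv.toNat + 1) (by omega) (by omega),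
        ramp_one, hy]
      simp [List.append_assoc]
    · have hY : Yint m yv = ([(0 : ℤ)] ++ (ramp 1 (c.toNat - 1) ++ ([c] ++
          ramp (c.toNat + 1) (yv.toNat - 1 - c.toNat)))) ++
          (ramp (yv.toNat + 1) (m - 1 - yv.toNat) ++ [(m : ℤ)]) := by
        rw [Yint_eq m yv hy1 hy2,
          ramp_split' 0 yv.toNat 1 ((c.toNat - 1) + (1 + (yv.toNat - 1 - c.toNat))) 1
            (by omega) (by omega),
          ramp_split' 1 _ (c.toNat - 1) (1 + (yv.toNat - 1 - c.toNat)) c.toNat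
            (by omega) (by omega),
          ramp_split' c.toNat _ 1 (yv.toNat - 1 - c.toNat) (c.toNat + 1) (by omega) (by omega),
          ramp_split' (yv.toNat + 1) (m - yv.toNat) (m - 1 - yv.toNat) 1 m (by omega) (by omega),
          ramp_one, ramp_one, ramp_one, hc]
        simp [List.append_assoc]
      have hPY : IsExpansion ([(0 : ℤ)] ++ (ramp 1 (c.toNat - 1) ++ ([c] ++
          ramp (c.toNat + 1) (yv.toNat - 1 - c.toNat))))
          (List.replicate a 0 ++ (ramp 1 (c.toNat - 1) ++ (List.replicate a c ++
          ramp (c.toNat + 1) (yv.toNat - 1 - c.toNat)))) :=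
        isExpansion_append (isExpansion_single 0 a ha) (isExpansion_append (isExpansion_refl _)
          (isExpansion_append (isExpansion_single c a ha) (isExpansion_refl _)))
      have hRY : IsExpansion (ramp (yv.toNat + 1) (m - 1 - yv.toNat) ++ [(m : ℤ)])
          (ramp (yv.toNat + 1) (m - 1 - yv.toNat) ++ List.replicate a (m : ℤ)) :=
        isExpansion_append (isExpansion_refl _) (isExpansion_single _ a ha)
      obtain ⟨t, ht⟩ : ∃ t, ramp (yv.toNat + 1) (m - 1 - yv.toNat) ++ List.replicate a (m : ℤ)
          = (yv + 1) :: t := by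
        rcases Nat.eq_zero_or_pos (m - 1 - yv.toNat) with h0 | hpos
        · have hmy : (m : ℤ) = yv + 1 := by omega
          refine ⟨List.replicate a' (m : ℤ), ?_⟩
          rw [h0, hadef, List.replicate_succ, hmy]
          rfl
        · obtain ⟨n', hn⟩ : ∃ n', m - 1 - yv.toNat = n' + 1 := ⟨m - 1 - yv.toNat - 1, by omega⟩
          rw [hn, ramp_succ]
          refine ⟨ramp (yv.toNat + 1 + 1) n' ++ List.replicate a (m : ℤ), ?_⟩
          rw [show ((yv.toNat + 1 : ℕ) : ℤ) = yv + 1 by push_cast [hy]; ring]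
          rfl
      rw [hY]
      refine isExpansion_append hPY ?_
      rw [ht]
      exact isExpansion_cons_dup (ht ▸ hRY)
  · -- yv < c
    refine ⟨List.replicate a 0 ++ ramp 1 (yv.toNat - 1),
      ramp (yv.toNat + 1) (c.toNat - 1 - yv.toNat) ++ (List.replicate a c ++
        (ramp (c.toNat + 1) (m - 1 - c.toNat) ++ List.replicate a (m : ℤ))), ?_, ?_⟩
    · rw [Zint_eq m a c hc1,
        ramp_split' 1 (c.toNat - 1) (yv.toNat - 1) (1 + (c.toNat - 1 - yv.toNat)) yv.toNat
          (by omega) (by omega),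
        ramp_split' yv.toNat _ 1 (c.toNat - 1 - yv.toNat) (yv.toNat + 1) (by omega) (by omega),
        ramp_one, hy]
      simp [List.append_assoc]
    · have hY : Yint m yv = ([(0 : ℤ)] ++ ramp 1 (yv.toNat - 1)) ++
          (ramp (yv.toNat + 1) (c.toNat - 1 - yv.toNat) ++ ([c] ++
          (ramp (c.toNat + 1) (m - 1 - c.toNat) ++ [(m : ℤ)]))) := by
        rw [Yint_eq m yv hy1 hy2,
          ramp_split' 0 yv.toNat 1 (yv.toNat - 1) 1 (by omega) (by omega),
          ramp_split' (yv.toNat + 1) (m - yv.toNat) (c.toNat - 1 - yv.toNat)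
            (1 + ((m - 1 - c.toNat) + 1)) c.toNat (by omega) (by omega),
          ramp_split' c.toNat _ 1 ((m - 1 - c.toNat) + 1) (c.toNat + 1) (by omega) (by omega),
          ramp_split' (c.toNat + 1) _ (m - 1 - c.toNat) 1 m (by omega) (by omega),
          ramp_one, ramp_one, ramp_one, hc]
        simp [List.append_assoc]
      have hPY : IsExpansion ([(0 : ℤ)] ++ ramp 1 (yv.toNat - 1))
          (List.replicate a 0 ++ ramp 1 (yv.toNat - 1)) :=
        isExpansion_append (isExpansion_single 0 a ha) (isExpansion_refl _)
      have hRY : IsExpansion (ramp (yv.toNat + 1) (c.toNat - 1 - yv.toNat) ++ ([c] ++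
          (ramp (c.toNat + 1) (m - 1 - c.toNat) ++ [(m : ℤ)])))
          (ramp (yv.toNat + 1) (c.toNat - 1 - yv.toNat) ++ (List.replicate a c ++
          (ramp (c.toNat + 1) (m - 1 - c.toNat) ++ List.replicate a (m : ℤ)))) :=
        isExpansion_append (isExpansion_refl _) (isExpansion_append (isExpansion_single c a ha)
          (isExpansion_append (isExpansion_refl _) (isExpansion_single _ a ha)))
      obtain ⟨t, ht⟩ : ∃ t, ramp (yv.toNat + 1) (c.toNat - 1 - yv.toNat) ++ (List.replicate a c ++
          (ramp (c.toNat + 1) (m - 1 - c.toNat) ++ List.replicate a (m : ℤ))) = (yv + 1) :: t := by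
        rcases Nat.eq_zero_or_pos (c.toNat - 1 - yv.toNat) with h0 | hpos
        · have hcy : c = yv + 1 := by omega
          refine ⟨List.replicate a' c ++ (ramp (c.toNat + 1) (m - 1 - c.toNat) ++
            List.replicate a (m : ℤ)), ?_⟩
          rw [h0, hadef, List.replicate_succ, hcy]
          rfl
        · obtain ⟨n', hn⟩ : ∃ n', c.toNat - 1 - yv.toNat = n' + 1 :=
            ⟨c.toNat - 1 - yv.toNat - 1, by omega⟩
          rw [hn, ramp_succ]
          refine ⟨ramp (yv.toNat + 1 + 1) n' ++ (List.replicate a c ++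
            (ramp (c.toNat + 1) (m - 1 - c.toNat) ++ List.replicate a (m : ℤ))), ?_⟩
          rw [show ((yv.toNat + 1 : ℕ) : ℤ) = yv + 1 by push_cast [hy]; ring]
          rfl
      rw [hY]
      refine isExpansion_append hPY ?_
      rw [ht]
      exact isExpansion_cons_dup (ht ▸ hRY)

/-- If x_i ≠ y_i then dtw(A(x), B(i)) ≤ 1. -/
theorem dtw_int_index_ne (m a k : ℕ) (hm : 2 ≤ m) (hma : m ≤ a) (hk : 0 < k)
    (x : Fin k → ℤ) (hx : ∀ j, 1 ≤ x j ∧ x j ≤ (m : ℤ) - 1)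
    (i : Fin k) (yv : ℤ) (hyv : 1 ≤ yv ∧ yv ≤ (m : ℤ) - 1)
    (h : x i ≠ yv) :
    dtw dist (Aint m a k x) (Bint m k i yv) ≤ 1 := by
  have ha : 0 < a := by omega
  obtain ⟨P, R, hZ, hE⟩ := block_key m a hm ha (x i) yv (hx i).1 (hx i).2 hyv.1 hyv.2 h
  set yb : Fin k → List ℤ := fun j => if j = i then P ++ (yv + 1) :: R else Zint m a (x j)
    with hyb
  have hlen : ∀ j, (Zint m a (x j)).length = (yb j).length := by
    intro j
    by_cases hj : j = i
    · subst hj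
      simp only [hyb, if_pos rfl]
      rw [hZ]
      simp
    · simp [hyb, hj]
  have hforlen : List.Forall₂ (fun u v => u.length = v.length)
      (List.ofFn fun j => Zint m a (x j)) (List.ofFn yb) := forall₂_ofFn hlen
  have hB : Bint m k i yv =
      (List.ofFn fun j => if j = i then Yint m yv else fullBlock m).flatten := by
    rw [ofFn_ite k i (fullBlock m) (Yint m yv)]
    simp [Bint, List.flatten_append]
  have hexp : IsExpansion (Bint m k i yv) ((List.ofFn yb).flatten) := by
    rw [hB]
    refine isExpansion_flatten (forall₂_ofFn fun j => ?_)
    by_cases hj : j = i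
    · subst hj
      simpa [hyb] using hE
    · simpa [hyb, hj] using isExpansion_fullBlock m a ha (x j) (hx j).1 (hx j).2
  have hcorr : IsCorrespondence (Aint m a k x) (Bint m k i yv)
      (Aint m a k x) ((List.ofFn yb).flatten) :=
    ⟨isExpansion_refl _, hexp, by simp only [Aint]; exact flatten_length_eq hforlen⟩
  refine le_trans (dtw_dist_le hcorr) (le_of_eq ?_)
  simp only [corrCost, Aint]
  rw [zip_sum_flatten hforlen, zipWith_ofFn, List.sum_ofFn]
  have hterm : ∀ j : Fin k,
      (List.zipWith (dist : ℤ → ℤ → ℝ) (Zint m a (x j)) (yb j)).sum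
        = if j = i then 1 else 0 := by
    intro j
    by_cases hj : j = i
    · subst hj
      simp only [hyb, if_pos rfl]
      rw [hZ, List.zipWith_append (l₁ := P) (l₂ := P) rfl, List.zipWith_cons_cons, List.sum_append,
        List.sum_cons, zip_dist_self, zip_dist_self]
      have hd : dist yv (yv + 1) = (1 : ℝ) := by
        rw [Int.dist_eq]
        have : ((yv : ℝ) - ((yv + 1 : ℤ) : ℝ)) = -1 := by push_cast; ring
        rw [this]
        norm_num
      rw [hd]
      norm_num
    · simp [hyb, hj, zip_dist_self]
  rw [Finset.sum_congr rfl fun j _ => hterm j]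
  simp
end

section
/- Let Σ = {0,1,…,m} with d(a,b) = |a−b|, let α ≥ m ≥ 2, let k be a positive integer, and for c ∈ {1,…,m−1} define Z(c) = 0^α ∘ (1,2,…,c−1) ∘ c^α ∘ (c+1,…,m−1) ∘ m^α. For x ∈ {1,…,m−1}^k let A(x) = Z(x₁)∘⋯∘Z(x_k); let [0,m] = (0,1,…,m), Y(y) = (0,1,…,y−1, y+1,…,m), and B(i) = [0,m]^{i−1} ∘ Y(y_i) ∘ [0,m]^{k−i}. If x_i = y_i, then dtw(A(x), B(i)) ≥ α. -/
namespace DTWAux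

/- ## generic getD helpers -/

lemma getD_append_right' {α : Type*} (l₁ l₂ : List α) (d : α) (n : ℕ) (h : l₁.length ≤ n) :
    (l₁ ++ l₂).getD n d = l₂.getD (n - l₁.length) d := by
  rw [List.getD_eq_getElem?_getD, List.getD_eq_getElem?_getD, List.getElem?_append_right h]

lemma getD_replicate' {α : Type*} (n u : ℕ) (c d : α) (h : u < n) :
    (List.replicate n c).getD u d = c := by
  rw [List.getD_eq_getElem?_getD, List.getElem?_replicate, if_pos h]; rfl

lemma getD_map_range (n u : ℕ) (f : ℕ → ℤ) (d : ℤ) (h : u < n) :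
    ((List.range n).map f).getD u d = f u := by
  rw [List.getD_eq_getElem _ _ (by simpa using h), List.getElem_map, List.getElem_range]

lemma flatten_len {α : Type*} (L : ℕ) : ∀ (ls : List (List α)), (∀ l ∈ ls, l.length = L) →
    ls.flatten.length = ls.length * L := by
  intro ls h
  induction ls with
  | nil => simp
  | cons hd tl ih =>
    simp only [List.flatten_cons, List.length_append, List.length_cons]
    rw [h hd (by simp), ih (fun l hl => h l (by simp [hl]))]; ring

lemma flatten_getD {α : Type*} (L : ℕ) (d : α) : ∀ (ls : List (List α)) (j u : ℕ),
    (∀ l ∈ ls, l.length = L) → j < ls.length → u < L →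
    ls.flatten.getD (j*L+u) d = (ls.getD j []).getD u d := by
  intro ls
  induction ls with
  | nil => intro j u _ hj _; simp at hj
  | cons hd tl ih =>
    intro j u hlen hj hu
    have hhd : hd.length = L := hlen hd (by simp)
    cases j with
    | zero =>
      simp only [List.flatten_cons, Nat.zero_mul, Nat.zero_add]
      rw [List.getD_append _ _ _ _ (by rw [hhd]; exact hu)]; rfl
    | succ j' =>
      simp only [List.flatten_cons]
      rw [getD_append_right' _ _ _ _ (by rw [hhd]; nlinarith [Nat.succ_mul j' L])]
      rw [hhd]
      have : (j' + 1) * L + u - L = j' * L + u := by rw [Nat.succ_mul]; omega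
      rw [this, ih j' u (fun l hl => hlen l (by simp [hl])) (by simpa using hj) hu]
      rfl

/- ## normalized forms of the definitions (the casts in the original definitions
elaborate via the list monad) -/

lemma flatMap_cast (l : List ℕ) : (l.flatMap fun a => [((a:ℕ):ℤ)]) = l.map (Nat.cast : ℕ → ℤ) := by
  induction l with
  | nil => rfl
  | cons h t ih => rw [List.flatMap_cons, List.map_cons, ih]; rfl

lemma Zint_eq (m a : ℕ) (c : ℤ) : Zint m a c =
    List.replicate a 0 ++ ((List.range (c - 1).toNat).map (fun (t : ℕ) => ((t : ℤ) + 1)) ++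
    (List.replicate a c ++ ((List.range (m - 1 - c.toNat)).map (fun (t : ℕ) => c + 1 + (t : ℤ)) ++
    List.replicate a (m : ℤ)))) := by
  unfold Zint
  rw [show ((List.range (c-1).toNat : List ℕ) : List ℤ) = (List.range (c-1).toNat).map (Nat.cast : ℕ → ℤ) from flatMap_cast _,
      show ((List.range (m-1-c.toNat) : List ℕ) : List ℤ) = (List.range (m-1-c.toNat)).map (Nat.cast : ℕ → ℤ) from flatMap_cast _,
      List.map_map, List.map_map, List.append_assoc, List.append_assoc, List.append_assoc]
  rfl

lemma fullBlock_eq (m : ℕ) : fullBlock m = (List.range (m + 1)).map (Nat.cast : ℕ → ℤ) := by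
  unfold fullBlock
  rw [show ((List.range (m+1) : List ℕ) : List ℤ) = (List.range (m+1)).map (Nat.cast : ℕ → ℤ) from flatMap_cast _, List.map_map]
  rfl

lemma Yint_eq (m : ℕ) (y : ℤ) :
    Yint m y = ((List.range (m + 1)).map (Nat.cast : ℕ → ℤ)).filter (fun t => t != y) := by
  unfold Yint
  rw [show ((List.range (m+1) : List ℕ) : List ℤ) = (List.range (m+1)).map (Nat.cast : ℕ → ℤ) from flatMap_cast _, List.map_map]
  rfl

/- ## structure of Z -/

lemma Z_len (m a : ℕ) (c : ℤ) (hc1 : 1 ≤ c) (hc2 : c ≤ (m:ℤ)-1) (hm : 2 ≤ m) :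
    (Zint m a c).length = 3*a + (m-2) := by
  rw [Zint_eq]
  simp only [List.length_append, List.length_replicate, List.length_map, List.length_range]
  omega

lemma Z_getD0 (m a : ℕ) (c : ℤ) (u : ℕ) (hu : u < a) : (Zint m a c).getD u 0 = 0 := by
  rw [Zint_eq, List.getD_append _ _ _ _ (by simpa using hu), getD_replicate' _ _ _ _ hu]

lemma Z_getDc (m a : ℕ) (c : ℤ) (hc1 : 1 ≤ c) (u : ℕ) (hu : u < a) :
    (Zint m a c).getD (a + (c.toNat - 1) + u) 0 = c := by
  rw [Zint_eq]
  have h1 : (c-1).toNat = c.toNat - 1 := by omega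
  rw [getD_append_right' _ _ _ _ (by simp only [List.length_replicate]; omega)]
  simp only [List.length_replicate]
  have e1 : a + (c.toNat - 1) + u - a = (c.toNat - 1) + u := by omega
  rw [e1, getD_append_right' _ _ _ _ (by simp only [List.length_map, List.length_range, h1]; omega)]
  simp only [List.length_map, List.length_range, h1]
  have e2 : c.toNat - 1 + u - (c.toNat - 1) = u := by omega
  rw [e2, List.getD_append _ _ _ _ (by simpa using hu), getD_replicate' _ _ _ _ hu]

lemma Z_getDm (m a : ℕ) (c : ℤ) (hc1 : 1 ≤ c) (hc2 : c ≤ (m:ℤ)-1) (hm : 2 ≤ m)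
    (u : ℕ) (hu : u < a) :
    (Zint m a c).getD (2*a + (m-2) + u) 0 = m := by
  rw [Zint_eq]
  have h1 : (c-1).toNat = c.toNat - 1 := by omega
  have h2 : 1 ≤ c.toNat := by omega
  have h3 : c.toNat ≤ m - 1 := by omega
  rw [getD_append_right' _ _ _ _ (by simp only [List.length_replicate]; omega)]
  simp only [List.length_replicate]
  rw [getD_append_right' _ _ _ _ (by simp only [List.length_map, List.length_range, h1]; omega)]
  simp only [List.length_map, List.length_range, h1]
  rw [getD_append_right' _ _ _ _ (by simp only [List.length_replicate]; omega)]
  simp only [List.length_replicate]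
  rw [getD_append_right' _ _ _ _ (by simp only [List.length_map, List.length_range]; omega)]
  simp only [List.length_map, List.length_range]
  have e : 2*a + (m-2) + u - a - (c.toNat - 1) - a - (m - 1 - c.toNat) = u := by omega
  rw [e, getD_replicate' _ _ _ _ hu]

/- ## structure of Y -/

lemma Y_struct (m : ℕ) (c : ℤ) (hc1 : 1 ≤ c) (hc2 : c ≤ (m:ℤ)-1) (hm : 2 ≤ m) :
    Yint m c = ((List.range c.toNat).map (Nat.cast : ℕ → ℤ)) ++
      ((List.range (m - c.toNat)).map fun t => ((c.toNat + 1 + t : ℕ) : ℤ)) := by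
  have h2 : 1 ≤ c.toNat := by omega
  have h3 : c.toNat ≤ m - 1 := by omega
  rw [Yint_eq]
  have e1 : m + 1 = c.toNat + (1 + (m - c.toNat)) := by omega
  rw [e1, List.range_add, List.range_add, List.map_append, List.filter_append]
  congr 1
  · rw [List.filter_eq_self.mpr]
    intro t ht
    simp only [List.mem_map, List.mem_range] at ht
    obtain ⟨u, hu, rfl⟩ := ht
    simp only [bne_iff_ne, ne_eq]
    intro hc
    omega
  · simp only [List.map_append, List.map_map, List.filter_append]
    rw [show List.range 1 = [0] from rfl]
    simp only [List.map_cons, List.map_nil, List.filter_cons]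
    rw [if_neg (by simp only [Function.comp_apply, Nat.add_zero, bne_iff_ne, ne_eq, not_not]; omega)]
    rw [List.filter_nil, List.nil_append, List.filter_eq_self.mpr]
    · apply List.map_congr_left
      intro t ht
      simp only [Function.comp_apply]
      push_cast
      ring
    · intro t ht
      simp only [List.mem_map, List.mem_range] at ht
      obtain ⟨u, hu, rfl⟩ := ht
      simp only [Function.comp_apply, bne_iff_ne, ne_eq]
      intro hc
      omega

lemma Y_len (m : ℕ) (c : ℤ) (hc1 : 1 ≤ c) (hc2 : c ≤ (m:ℤ)-1) (hm : 2 ≤ m) :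
    (Yint m c).length = m := by
  rw [Y_struct m c hc1 hc2 hm]
  simp only [List.length_append, List.length_map, List.length_range]
  omega

lemma Y_getD (m : ℕ) (c : ℤ) (hc1 : 1 ≤ c) (hc2 : c ≤ (m:ℤ)-1) (hm : 2 ≤ m)
    (u : ℕ) (hu : u < m) :
    (Yint m c).getD u 0 = (((if u < c.toNat then u else u+1) : ℕ) : ℤ) := by
  rw [Y_struct m c hc1 hc2 hm]
  by_cases h : u < c.toNat
  · rw [List.getD_append _ _ _ _ (by simp only [List.length_map, List.length_range]; omega),
      getD_map_range _ _ _ _ h, if_pos h]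
  · rw [getD_append_right' _ _ _ _ (by simp only [List.length_map, List.length_range]; omega)]
    simp only [List.length_map, List.length_range]
    rw [getD_map_range _ _ _ _ (by omega), if_neg h]
    congr 1
    omega

/- ## structure of fullBlock -/

lemma full_len (m : ℕ) : (fullBlock m).length = m + 1 := by
  rw [fullBlock_eq]; simp only [List.length_map, List.length_range]

lemma full_getD (m u : ℕ) (hu : u < m + 1) : (fullBlock m).getD u 0 = (u : ℤ) := by
  rw [fullBlock_eq, getD_map_range _ _ _ _ hu]

/- ## structure of A -/

lemma A_len (m a k : ℕ) (hm : 2 ≤ m) (x : Fin k → ℤ)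
    (hx : ∀ j, 1 ≤ x j ∧ x j ≤ (m:ℤ) - 1) :
    (Aint m a k x).length = k * (3*a + (m-2)) := by
  unfold Aint
  rw [flatten_len (3*a + (m-2)) _ ?_, List.length_ofFn]
  intro l hl
  obtain ⟨j, rfl⟩ := List.mem_ofFn.mp hl
  exact Z_len m a (x j) (hx j).1 (hx j).2 hm

lemma A_getD (m a k : ℕ) (hm : 2 ≤ m) (x : Fin k → ℤ)
    (hx : ∀ j, 1 ≤ x j ∧ x j ≤ (m:ℤ) - 1) (j : Fin k) (u : ℕ) (hu : u < 3*a + (m-2)) :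
    (Aint m a k x).getD ((j:ℕ) * (3*a + (m-2)) + u) 0 = (Zint m a (x j)).getD u 0 := by
  unfold Aint
  rw [flatten_getD (3*a + (m-2)) 0 _ (j:ℕ) u ?_ (by simp [j.isLt]) hu]
  · congr 1
    rw [List.getD_eq_getElem _ _ (by simp [j.isLt])]
    simp
  · intro l hl
    obtain ⟨j', rfl⟩ := List.mem_ofFn.mp hl
    exact Z_len m a (x j') (hx j').1 (hx j').2 hm

/- ## structure of B -/

lemma B_len (m k : ℕ) (hm : 2 ≤ m) (hk : 0 < k) (i : Fin k) (c : ℤ)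
    (hc1 : 1 ≤ c) (hc2 : c ≤ (m:ℤ)-1) :
    (Bint m k i c).length = k * (m+1) - 1 := by
  unfold Bint
  have h1 : (List.replicate (i:ℕ) (fullBlock m)).flatten.length = (i:ℕ) * (m+1) := by
    rw [flatten_len (m+1) _ (fun l hl => by rw [List.eq_of_mem_replicate hl, full_len]),
      List.length_replicate]
  have h2 : (List.replicate (k - 1 - (i:ℕ)) (fullBlock m)).flatten.length
      = (k - 1 - (i:ℕ)) * (m+1) := by
    rw [flatten_len (m+1) _ (fun l hl => by rw [List.eq_of_mem_replicate hl, full_len]),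
      List.length_replicate]
  simp only [List.length_append, h1, h2, Y_len m c hc1 hc2 hm]
  have := i.isLt
  have e : (i:ℕ)*(m+1) + (k - 1 - (i:ℕ))*(m+1) = (k-1)*(m+1) := by
    rw [← Nat.add_mul]; congr 1; omega
  have e2 : (k-1)*(m+1) + (m+1) = k*(m+1) := by
    rw [← Nat.succ_mul]; congr 1; omega
  omega

lemma B_getD (m k : ℕ) (hm : 2 ≤ m) (hk : 0 < k) (i : Fin k) (c : ℤ)
    (hc1 : 1 ≤ c) (hc2 : c ≤ (m:ℤ)-1) (q : ℕ) (hq : q < k*(m+1) - 1) :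
    (Bint m k i c).getD q 0 =
      (((if q < (i:ℕ)*(m+1) + c.toNat then q else q+1) % (m+1) : ℕ) : ℤ) := by
  have hik := i.isLt
  set M := m + 1 with hM
  have hcn1 : 1 ≤ c.toNat := by omega
  have hcn2 : c.toNat ≤ m - 1 := by omega
  unfold Bint
  have hrep : ∀ n : ℕ, ∀ l ∈ List.replicate n (fullBlock m), l.length = M :=
    fun n l hl => by rw [List.eq_of_mem_replicate hl, full_len]
  have h1 : (List.replicate (i:ℕ) (fullBlock m)).flatten.length = (i:ℕ) * M := by
    rw [flatten_len M _ (hrep _), List.length_replicate]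
  have e : (i:ℕ)*M + (k - 1 - (i:ℕ))*M = (k-1)*M := by
    rw [← Nat.add_mul]; congr 1; omega
  have e2 : (k-1)*M + M = k*M := by
    rw [← Nat.succ_mul]; congr 1; omega
  by_cases hr1 : q < (i:ℕ) * M
  · -- in the first group of full blocks
    have hdiv : q / M < (i:ℕ) := Nat.div_lt_of_lt_mul (by rw [Nat.mul_comm]; exact hr1)
    have hmod : q % M < M := Nat.mod_lt _ (by omega)
    have hqe : q = q/M*M + q%M := by rw [Nat.mul_comm]; exact (Nat.div_add_mod q M).symm
    rw [List.getD_append _ _ _ _ (by rw [List.length_append, h1, Y_len m c hc1 hc2 hm]; omega)]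
    rw [List.getD_append _ _ _ _ (by rw [h1]; exact hr1)]
    have key := flatten_getD M (0:ℤ) (List.replicate (i:ℕ) (fullBlock m)) (q/M) (q%M)
      (hrep _) (by simpa using hdiv) hmod
    rw [← hqe] at key
    rw [key, show (List.replicate (i:ℕ) (fullBlock m)).getD (q/M) [] = fullBlock m from by
        rw [List.getD_eq_getElem _ _ (by simpa using hdiv)]; simp,
      full_getD m _ hmod, if_pos (by omega)]
  · by_cases hr2 : q < (i:ℕ) * M + m
    · -- in the Y block
      rw [List.getD_append _ _ _ _ (by rw [List.length_append, h1, Y_len m c hc1 hc2 hm]; omega)]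
      rw [getD_append_right' _ _ _ _ (by rw [h1]; omega), h1]
      rw [Y_getD m c hc1 hc2 hm _ (by omega)]
      have hqm : q % M = q - (i:ℕ)*M := by
        conv_lhs => rw [show q = (q - (i:ℕ)*M) + (i:ℕ)*M from by omega]
        rw [Nat.add_mul_mod_self_right]
        exact Nat.mod_eq_of_lt (by omega)
      have hqm1 : (q+1) % M = q - (i:ℕ)*M + 1 := by
        conv_lhs => rw [show q+1 = (q - (i:ℕ)*M + 1) + (i:ℕ)*M from by omega]
        rw [Nat.add_mul_mod_self_right]
        exact Nat.mod_eq_of_lt (by omega)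
      by_cases hcase : q < (i:ℕ)*M + c.toNat
      · rw [if_pos (by omega), if_pos hcase, hqm]
      · rw [if_neg (by omega), if_neg hcase, hqm1]
    · -- in the last group of full blocks
      rw [getD_append_right' _ _ _ _ (by rw [List.length_append, h1, Y_len m c hc1 hc2 hm]; omega),
        List.length_append, h1, Y_len m c hc1 hc2 hm]
      rw [show q - ((i:ℕ)*M + m) = q - (i:ℕ)*M - m from by omega]
      have hult : q - (i:ℕ)*M - m < (k - 1 - (i:ℕ)) * M := by omega
      have hdiv : (q - (i:ℕ)*M - m) / M < k - 1 - (i:ℕ) :=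
        Nat.div_lt_of_lt_mul (by rw [Nat.mul_comm M (k - 1 - (i:ℕ))]; exact hult)
      have hmod : (q - (i:ℕ)*M - m) % M < M := Nat.mod_lt _ (by omega)
      have hqe : q - (i:ℕ)*M - m = (q - (i:ℕ)*M - m)/M*M + (q - (i:ℕ)*M - m)%M := by
        rw [Nat.mul_comm ((q - (i:ℕ)*M - m)/M) M]; exact (Nat.div_add_mod _ M).symm
      have key := flatten_getD M (0:ℤ) (List.replicate (k - 1 - (i:ℕ)) (fullBlock m))
        ((q - (i:ℕ)*M - m)/M) ((q - (i:ℕ)*M - m)%M) (hrep _) (by simpa using hdiv) hmod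
      rw [← hqe] at key
      rw [key, show (List.replicate (k - 1 - (i:ℕ)) (fullBlock m)).getD ((q - (i:ℕ)*M - m)/M) [] = fullBlock m from by
          rw [List.getD_eq_getElem _ _ (by simpa using hdiv)]; simp,
        full_getD m _ hmod, if_neg (by omega)]
      congr 1
      conv_rhs => rw [show q+1 = (q - (i:ℕ)*M - m) + ((i:ℕ)+1)*M from by
        rw [Nat.succ_mul]; omega]
      rw [Nat.add_mul_mod_self_right]

/- ## expansions -/

lemma exp_spec_aux : ∀ (x : List ℤ) (ks : List ℕ), ks.length = x.length → (∀ k ∈ ks, 0 < k) →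
    ∃ f : ℕ → ℕ,
      (∀ s t, s ≤ t → f s ≤ f t) ∧
      (∀ j, j < x.length → ∃ t,
        t < (List.zipWith (fun a k => List.replicate k a) x ks).flatten.length ∧ f t = j) ∧
      (∀ t, t < (List.zipWith (fun a k => List.replicate k a) x ks).flatten.length →
        f t < x.length ∧
        (List.zipWith (fun a k => List.replicate k a) x ks).flatten.getD t 0 = x.getD (f t) 0) := by
  intro x
  induction x with
  | nil => intro ks _ _; exact ⟨id, fun _ _ h => h, by simp, by simp⟩
  | cons c x' ih =>
    intro ks hlen hpos
    cases ks with
    | nil => simp at hlen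
    | cons n ks' =>
      have hn : 0 < n := hpos n (by simp)
      obtain ⟨f', hmono', hsurj', hval'⟩ := ih ks' (by simpa using hlen)
        (fun k hk => hpos k (by simp [hk]))
      set rest := (List.zipWith (fun a k => List.replicate k a) x' ks').flatten with hrest
      refine ⟨fun t => if t < n then 0 else f' (t - n) + 1, ?_, ?_, ?_⟩
      · intro s t hst
        by_cases hs : s < n
        · simp [hs]
        · have ht : ¬ t < n := by omega
          simp only [if_neg hs, if_neg ht, Nat.add_le_add_iff_right]
          exact hmono' _ _ (by omega)
      · intro j hj
        have hflatlen : (List.zipWith (fun a k => List.replicate k a) (c :: x') (n :: ks')).flatten.length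
            = n + rest.length := by simp [hrest]
        cases j with
        | zero => exact ⟨0, by rw [hflatlen]; omega, by simp [hn]⟩
        | succ j' =>
          obtain ⟨t', ht', hft'⟩ := hsurj' j' (by simpa using hj)
          refine ⟨n + t', by rw [hflatlen]; omega, ?_⟩
          have : ¬ n + t' < n := by omega
          simp [this, hft']
      · intro t ht
        have hflatlen : (List.zipWith (fun a k => List.replicate k a) (c :: x') (n :: ks')).flatten.length
            = n + rest.length := by simp [hrest]
        rw [hflatlen] at ht
        simp only [List.zipWith_cons_cons, List.flatten_cons]
        by_cases htn : t < n
        · simp only [if_pos htn]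
          refine ⟨by simp, ?_⟩
          rw [List.getD_append _ _ _ _ (by simpa using htn), getD_replicate' _ _ _ _ htn]
          rfl
        · simp only [if_neg htn]
          obtain ⟨h1, h2⟩ := hval' (t - n) (by omega)
          refine ⟨by simpa using Nat.succ_lt_succ h1, ?_⟩
          rw [getD_append_right' _ _ _ _ (by simpa using not_lt.mp htn)]
          simpa using h2

lemma exp_spec {x xb : List ℤ} (h : IsExpansion x xb) :
    ∃ f : ℕ → ℕ, (∀ s t, s ≤ t → f s ≤ f t) ∧
      (∀ j, j < x.length → ∃ t, t < xb.length ∧ f t = j) ∧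
      (∀ t, t < xb.length → f t < x.length ∧ xb.getD t 0 = x.getD (f t) 0) := by
  obtain ⟨ks, h1, h2, rfl⟩ := h
  exact exp_spec_aux x ks h1 h2

/- ## cost as a sum -/

lemma cost_sum (δ : ℤ → ℤ → ℝ) : ∀ (xb yb : List ℤ), xb.length = yb.length →
    corrCost δ xb yb = ∑ t ∈ Finset.range xb.length, δ (xb.getD t 0) (yb.getD t 0) := by
  intro xb
  induction xb with
  | nil => intro yb h; simp [corrCost]
  | cons p xb' ih =>
    intro yb h
    cases yb with
    | nil => simp at h
    | cons q yb' =>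
      have hrec := ih yb' (by simpa using h)
      show (List.zipWith δ (p :: xb') (q :: yb')).sum = _
      rw [List.zipWith_cons_cons, List.sum_cons, List.length_cons, Finset.sum_range_succ']
      simp only [List.getD_cons_succ, List.getD_cons_zero]
      rw [← hrec]
      show δ p q + corrCost δ xb' yb' = corrCost δ xb' yb' + δ p q
      ring

/- ## existence of correspondences -/

lemma zip_rep_len (n : ℕ) : ∀ (x : List ℤ),
    (List.zipWith (fun a k => List.replicate k a) x (List.replicate x.length n)).flatten.length
      = x.length * n := by
  intro x
  induction x with
  | nil => simp
  | cons c x' ih =>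
    rw [List.length_cons, List.replicate_succ, List.zipWith_cons_cons, List.flatten_cons,
      List.length_append, List.length_replicate, ih]
    ring

lemma corr_nonempty (x y : List ℤ) (hx : 0 < x.length) (hy : 0 < y.length) :
    ∃ xb yb, IsCorrespondence x y xb yb := by
  refine ⟨_, _, ⟨⟨List.replicate x.length y.length, by simp,
      fun k hk => (List.eq_of_mem_replicate hk) ▸ hy, rfl⟩,
    ⟨List.replicate y.length x.length, by simp,
      fun k hk => (List.eq_of_mem_replicate hk) ▸ hx, rfl⟩, ?_⟩⟩
  rw [zip_rep_len, zip_rep_len, Nat.mul_comm]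

lemma one_le_dist_int {p q : ℤ} (h : p ≠ q) : (1:ℝ) ≤ dist p q := by
  rw [Int.dist_eq]
  have h1 : (1:ℤ) ≤ |p - q| := Int.one_le_abs (sub_ne_zero.mpr h)
  calc (1:ℝ) = ((1:ℤ):ℝ) := by norm_num
    _ ≤ ((|p-q| : ℤ) : ℝ) := by exact_mod_cast h1
    _ = |((p:ℝ) - q)| := by push_cast; simp

/- ## the block-index function on B -/

def ellD (P q : ℕ) : ℕ := if q < P then q else q+1
def blkD (M P q : ℕ) : ℕ := ellD P q / M

lemma ellD_mono (P : ℕ) {p q : ℕ} (h : p ≤ q) : ellD P p ≤ ellD P q := by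
  unfold ellD; split <;> split <;> omega

lemma ellD_strict (P : ℕ) {p q : ℕ} (h : p < q) : ellD P p < ellD P q := by
  unfold ellD; split <;> split <;> omega

lemma ellD_le (P q : ℕ) : ellD P q ≤ q + 1 := by unfold ellD; split <;> omega

lemma ellD_ne (P q : ℕ) : ellD P q ≠ P := by unfold ellD; split <;> omega

lemma blkD_mono (M P : ℕ) {p q : ℕ} (h : p ≤ q) : blkD M P p ≤ blkD M P q :=
  Nat.div_le_div_right (ellD_mono P h)

lemma blkD_step (m P : ℕ) {p q : ℕ} (hp : ellD P p % (m+1) = m)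
    (h0 : ellD P q % (m+1) = 0) (hpq : p < q) :
    blkD (m+1) P p + 1 ≤ blkD (m+1) P q := by
  have hM : 0 < m + 1 := Nat.succ_pos m
  have hdp := Nat.div_add_mod (ellD P p) (m+1)
  have hdq := Nat.div_add_mod (ellD P q) (m+1)
  have hlt := ellD_strict P hpq
  have h2 : (m+1)*(blkD (m+1) P p + 1) ≤ (m+1)*(blkD (m+1) P q) := by
    rw [Nat.mul_add, Nat.mul_one]
    unfold blkD
    omega
  exact Nat.le_of_mul_le_mul_left h2 hM

lemma blkD_ne (m P cn bi q : ℕ) (hP : P = bi*(m+1) + cn)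
    (h : ellD P q % (m+1) = cn) : blkD (m+1) P q ≠ bi := by
  intro hEq
  apply ellD_ne P q
  have hd := Nat.div_add_mod (ellD P q) (m+1)
  unfold blkD at hEq
  rw [hEq] at hd
  have hcomm : (m+1)*bi = bi*(m+1) := Nat.mul_comm _ _
  omega

lemma blkD_top (m kk P q : ℕ) (h : q < kk*(m+1) - 1) (hkk : 0 < kk) :
    blkD (m+1) P q < kk := by
  have h1 := ellD_le P q
  have h2 : ellD P q < (m+1)*kk := by
    have hc : kk*(m+1) = (m+1)*kk := Nat.mul_comm _ _
    omega
  exact Nat.div_lt_of_lt_mul h2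

end DTWAux

/-- If x_i = y_i then dtw(A(x), B(i)) ≥ α. -/
theorem dtw_int_index_eq (m a k : ℕ) (hm : 2 ≤ m) (hma : m ≤ a) (hk : 0 < k)
    (x : Fin k → ℤ) (hx : ∀ j, 1 ≤ x j ∧ x j ≤ (m : ℤ) - 1)
    (i : Fin k) (yv : ℤ) (hyv : 1 ≤ yv ∧ yv ≤ (m : ℤ) - 1)
    (h : x i = yv) :
    (a : ℝ) ≤ dtw dist (Aint m a k x) (Bint m k i yv) := by
  obtain ⟨hyv1, hyv2⟩ := hyv
  have hik : (i:ℕ) < k := i.isLt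
  have ha : 2 ≤ a := le_trans hm hma
  have hALen : (Aint m a k x).length = k * (3*a + (m-2)) := DTWAux.A_len m a k hm x hx
  have hBLen : (Bint m k i yv).length = k * (m+1) - 1 :=
    DTWAux.B_len m k hm hk i yv hyv1 hyv2
  apply le_csInf
  · obtain ⟨xb, yb, hc⟩ := DTWAux.corr_nonempty (Aint m a k x) (Bint m k i yv)
      (by rw [hALen]; exact Nat.mul_pos hk (by omega))
      (by rw [hBLen]
          have h3 : 1 * 3 ≤ k * (m+1) := Nat.mul_le_mul hk (by omega)
          omega)
    exact ⟨_, ⟨xb, yb, hc, rfl⟩⟩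
  rintro b ⟨xb, yb, ⟨hexpA, hexpB, hlen⟩, rfl⟩
  obtain ⟨f, hfmono, hfsurj, hfval⟩ := DTWAux.exp_spec hexpA
  obtain ⟨g, hgmono, hgsurj, hgval⟩ := DTWAux.exp_spec hexpB
  rw [DTWAux.cost_sum dist xb yb hlen]
  set n := xb.length with hn
  by_contra hcon
  push_neg at hcon
  -- every run of `a` equal letters in A must have an exactly matching partner in B
  have run_match : ∀ (s : ℕ) (v : ℤ), s + a ≤ k * (3*a + (m-2)) →
      (∀ u, u < a → (Aint m a k x).getD (s+u) 0 = v) →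
      ∃ t, t < n ∧ s ≤ f t ∧ f t < s + a ∧ (Bint m k i yv).getD (g t) 0 = v := by
    intro s v hs hval
    by_contra hno
    push_neg at hno
    have hchoice : ∀ j : ℕ, ∃ t, j ∈ Finset.Ico s (s+a) → (t < n ∧ f t = j) := by
      intro j
      by_cases hj : j ∈ Finset.Ico s (s+a)
      · rw [Finset.mem_Ico] at hj
        obtain ⟨t, ht, hft⟩ := hfsurj j (by rw [hALen]; omega)
        exact ⟨t, fun _ => ⟨ht, hft⟩⟩
      · exact ⟨0, fun hmem => absurd hmem hj⟩
    choose tj htj using hchoice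
    have h1 : ∀ j ∈ Finset.Ico s (s+a),
        (1:ℝ) ≤ dist (xb.getD (tj j) 0) (yb.getD (tj j) 0) := by
      intro j hj
      obtain ⟨htn, hfj⟩ := htj j hj
      rw [Finset.mem_Ico] at hj
      have hxbv : xb.getD (tj j) 0 = v := by
        rw [(hfval _ htn).2, hfj]
        have hv := hval (j - s) (by omega)
        rwa [show s + (j-s) = j from by omega] at hv
      have hybv : yb.getD (tj j) 0 = (Bint m k i yv).getD (g (tj j)) 0 :=
        (hgval _ (by rw [← hlen]; exact htn)).2
      rw [hxbv, hybv]
      exact DTWAux.one_le_dist_int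
        (Ne.symm (hno (tj j) htn (by rw [hfj]; omega) (by rw [hfj]; omega)))
    have hinj : ∀ j₁ ∈ Finset.Ico s (s+a), ∀ j₂ ∈ Finset.Ico s (s+a),
        tj j₁ = tj j₂ → j₁ = j₂ := by
      intro j₁ h₁ j₂ h₂ hEq
      rw [← (htj j₁ h₁).2, ← (htj j₂ h₂).2, hEq]
    have hsub : (Finset.Ico s (s+a)).image tj ⊆ Finset.range n := by
      intro t ht
      rw [Finset.mem_image] at ht
      obtain ⟨j, hj, rfl⟩ := ht
      exact Finset.mem_range.mpr (htj j hj).1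
    have hbig : (a:ℝ) ≤ ∑ t ∈ Finset.range n, dist (xb.getD t 0) (yb.getD t 0) := by
      calc (a:ℝ) = ∑ _j ∈ Finset.Ico s (s+a), (1:ℝ) := by
            rw [Finset.sum_const, Nat.card_Ico, nsmul_eq_mul, mul_one,
              Nat.add_sub_cancel_left]
        _ ≤ ∑ j ∈ Finset.Ico s (s+a), dist (xb.getD (tj j) 0) (yb.getD (tj j) 0) :=
            Finset.sum_le_sum h1
        _ = ∑ t ∈ (Finset.Ico s (s+a)).image tj, dist (xb.getD t 0) (yb.getD t 0) :=
            (Finset.sum_image (f := fun t => dist (xb.getD t 0) (yb.getD t 0)) hinj).symm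
        _ ≤ _ := Finset.sum_le_sum_of_subset_of_nonneg hsub (fun t _ _ => dist_nonneg)
    linarith
  -- apply it to the three runs of each block of A
  have h0 : ∀ j : Fin k, ∃ t, t < n ∧ (j:ℕ)*(3*a+(m-2)) ≤ f t ∧
      f t < (j:ℕ)*(3*a+(m-2)) + a ∧ (Bint m k i yv).getD (g t) 0 = 0 := by
    intro j
    apply run_match
    · have e1 : ((j:ℕ)+1)*(3*a+(m-2)) = (j:ℕ)*(3*a+(m-2)) + (3*a+(m-2)) := by
        rw [Nat.add_mul, Nat.one_mul]
      have e2 : ((j:ℕ)+1)*(3*a+(m-2)) ≤ k*(3*a+(m-2)) :=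
        Nat.mul_le_mul_right _ (by omega)
      omega
    · intro u hu
      rw [DTWAux.A_getD m a k hm x hx j u (by omega)]
      exact DTWAux.Z_getD0 m a (x j) u hu
  have h1r : ∀ j : Fin k, ∃ t, t < n ∧ (j:ℕ)*(3*a+(m-2)) + (a + ((x j).toNat - 1)) ≤ f t ∧
      f t < (j:ℕ)*(3*a+(m-2)) + (a + ((x j).toNat - 1)) + a ∧
      (Bint m k i yv).getD (g t) 0 = x j := by
    intro j
    have hxj1 : 1 ≤ x j := (hx j).1
    have hxj2 : x j ≤ (m:ℤ) - 1 := (hx j).2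
    apply run_match
    · have e1 : ((j:ℕ)+1)*(3*a+(m-2)) = (j:ℕ)*(3*a+(m-2)) + (3*a+(m-2)) := by
        rw [Nat.add_mul, Nat.one_mul]
      have e2 : ((j:ℕ)+1)*(3*a+(m-2)) ≤ k*(3*a+(m-2)) :=
        Nat.mul_le_mul_right _ (by omega)
      omega
    · intro u hu
      rw [show (j:ℕ)*(3*a+(m-2)) + (a + ((x j).toNat - 1)) + u
          = (j:ℕ)*(3*a+(m-2)) + (a + ((x j).toNat - 1) + u) from by omega,
        DTWAux.A_getD m a k hm x hx j _ (by omega)]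
      exact DTWAux.Z_getDc m a (x j) hxj1 u hu
  have h2r : ∀ j : Fin k, ∃ t, t < n ∧ (j:ℕ)*(3*a+(m-2)) + (2*a + (m-2)) ≤ f t ∧
      f t < (j:ℕ)*(3*a+(m-2)) + (2*a + (m-2)) + a ∧
      (Bint m k i yv).getD (g t) 0 = (m:ℤ) := by
    intro j
    apply run_match
    · have e1 : ((j:ℕ)+1)*(3*a+(m-2)) = (j:ℕ)*(3*a+(m-2)) + (3*a+(m-2)) := by
        rw [Nat.add_mul, Nat.one_mul]
      have e2 : ((j:ℕ)+1)*(3*a+(m-2)) ≤ k*(3*a+(m-2)) :=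
        Nat.mul_le_mul_right _ (by omega)
      omega
    · intro u hu
      rw [show (j:ℕ)*(3*a+(m-2)) + (2*a + (m-2)) + u
          = (j:ℕ)*(3*a+(m-2)) + (2*a + (m-2) + u) from by omega,
        DTWAux.A_getD m a k hm x hx j _ (by omega)]
      exact DTWAux.Z_getDm m a (x j) (hx j).1 (hx j).2 hm u hu
  choose t0 ht0n ht0l ht0r ht0v using h0
  choose t1 ht1n ht1l ht1r ht1v using h1r
  choose t2 ht2n ht2l ht2r ht2v using h2r
  -- order of the matched positions in B
  have cross : ∀ tA tB : ℕ, f tA < f tB →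
      (Bint m k i yv).getD (g tA) 0 ≠ (Bint m k i yv).getD (g tB) 0 → g tA < g tB := by
    intro tA tB hf hne
    have htt : tA < tB := by
      by_contra hc
      push_neg at hc
      exact absurd (hfmono _ _ hc) (by omega)
    rcases lt_or_eq_of_le (hgmono _ _ (le_of_lt htt)) with hlt | hEq
    · exact hlt
    · exact absurd (by rw [hEq]) hne
  have cross01 : ∀ j : Fin k, g (t0 j) < g (t1 j) := by
    intro j
    refine cross _ _ ?_ ?_
    · have := ht0r j; have := ht1l j; omega
    · rw [ht0v j, ht1v j]
      have := (hx j).1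
      omega
  have cross12 : ∀ j : Fin k, g (t1 j) < g (t2 j) := by
    intro j
    refine cross _ _ ?_ ?_
    · have := ht1r j; have := ht2l j
      have h1 := (hx j).1; have h2 := (hx j).2
      omega
    · rw [ht1v j, ht2v j]
      have := (hx j).2
      omega
  have cross20 : ∀ (jn : ℕ) (hjn : jn < k) (hjn1 : jn + 1 < k),
      g (t2 ⟨jn, hjn⟩) < g (t0 ⟨jn+1, hjn1⟩) := by
    intro jn hjn hjn1
    refine cross _ _ ?_ ?_
    · have := ht2r ⟨jn, hjn⟩; have := ht0l ⟨jn+1, hjn1⟩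
      have e1 : (jn+1)*(3*a+(m-2)) = jn*(3*a+(m-2)) + (3*a+(m-2)) := by
        rw [Nat.add_mul, Nat.one_mul]
      simp only at *
      omega
    · rw [ht2v ⟨jn, hjn⟩, ht0v ⟨jn+1, hjn1⟩]
      omega
  -- values of ellD on the matched positions
  have hglt : ∀ t, t < n → g t < k*(m+1) - 1 := by
    intro t ht
    have := (hgval t (by rw [← hlen]; exact ht)).1
    rwa [hBLen] at this
  have hBmod : ∀ t, t < n → (Bint m k i yv).getD (g t) 0 =
      (((if g t < (i:ℕ)*(m+1) + yv.toNat then g t else g t + 1) % (m+1) : ℕ) : ℤ) :=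
    fun t ht => DTWAux.B_getD m k hm hk i yv hyv1 hyv2 (g t) (hglt t ht)
  set P := (i:ℕ)*(m+1) + yv.toNat with hPdef
  have e0 : ∀ j : Fin k, DTWAux.ellD P (g (t0 j)) % (m+1) = 0 := by
    intro j
    have hv := ht0v j
    rw [hBmod _ (ht0n j)] at hv
    have hnat : (if g (t0 j) < P then g (t0 j) else g (t0 j) + 1) % (m+1) = 0 := by
      exact_mod_cast hv
    simpa [DTWAux.ellD] using hnat
  have e2 : ∀ j : Fin k, DTWAux.ellD P (g (t2 j)) % (m+1) = m := by
    intro j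
    have hv := ht2v j
    rw [hBmod _ (ht2n j)] at hv
    have hnat : (if g (t2 j) < P then g (t2 j) else g (t2 j) + 1) % (m+1) = m := by
      exact_mod_cast hv
    simpa [DTWAux.ellD] using hnat
  have e1i : DTWAux.ellD P (g (t1 i)) % (m+1) = yv.toNat := by
    have hv := ht1v i
    rw [hBmod _ (ht1n i), h] at hv
    have hnat : (if g (t1 i) < P then g (t1 i) else g (t1 i) + 1) % (m+1) = yv.toNat := by
      omega
    simpa [DTWAux.ellD] using hnat
  -- the block-counting contradiction
  have claim0 : ∀ jn : ℕ, ∀ hjn : jn < k, jn ≤ DTWAux.blkD (m+1) P (g (t0 ⟨jn, hjn⟩)) := by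
    intro jn
    induction jn with
    | zero => intro _; exact Nat.zero_le _
    | succ j' ihj =>
      intro hjn
      have hj' : j' < k := by omega
      have s1 : DTWAux.blkD (m+1) P (g (t0 ⟨j', hj'⟩)) ≤
          DTWAux.blkD (m+1) P (g (t1 ⟨j', hj'⟩)) :=
        DTWAux.blkD_mono _ _ (le_of_lt (cross01 _))
      have s2 : DTWAux.blkD (m+1) P (g (t1 ⟨j', hj'⟩)) ≤
          DTWAux.blkD (m+1) P (g (t2 ⟨j', hj'⟩)) :=
        DTWAux.blkD_mono _ _ (le_of_lt (cross12 _))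
      have s3 : DTWAux.blkD (m+1) P (g (t2 ⟨j', hj'⟩)) + 1 ≤
          DTWAux.blkD (m+1) P (g (t0 ⟨j'+1, hjn⟩)) :=
        DTWAux.blkD_step m P (e2 _) (e0 _) (cross20 j' hj' hjn)
      have := ihj hj'
      omega
  have claim1 : ∀ d : ℕ, ∀ hd : (i:ℕ) + d < k,
      (i:ℕ) + d + 1 ≤ DTWAux.blkD (m+1) P (g (t2 ⟨(i:ℕ)+d, hd⟩)) := by
    intro d
    induction d with
    | zero =>
      intro hd
      have hfi : (⟨(i:ℕ)+0, hd⟩ : Fin k) = i := Fin.ext (show (i:ℕ)+0 = (i:ℕ) from rfl)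
      rw [hfi]
      have s0 : (i:ℕ) ≤ DTWAux.blkD (m+1) P (g (t0 i)) := by
        have := claim0 (i:ℕ) hik
        have hfi2 : (⟨(i:ℕ), hik⟩ : Fin k) = i := Fin.ext rfl
        rwa [hfi2] at this
      have s1 : DTWAux.blkD (m+1) P (g (t0 i)) ≤ DTWAux.blkD (m+1) P (g (t1 i)) :=
        DTWAux.blkD_mono _ _ (le_of_lt (cross01 _))
      have s2 : DTWAux.blkD (m+1) P (g (t1 i)) ≤ DTWAux.blkD (m+1) P (g (t2 i)) :=
        DTWAux.blkD_mono _ _ (le_of_lt (cross12 _))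
      have sne : DTWAux.blkD (m+1) P (g (t1 i)) ≠ (i:ℕ) :=
        DTWAux.blkD_ne m P yv.toNat (i:ℕ) _ hPdef e1i
      omega
    | succ d' ihd =>
      intro hd
      have hd' : (i:ℕ) + d' < k := by omega
      have s3 : DTWAux.blkD (m+1) P (g (t2 ⟨(i:ℕ)+d', hd'⟩)) + 1 ≤
          DTWAux.blkD (m+1) P (g (t0 ⟨(i:ℕ)+d'+1, by omega⟩)) :=
        DTWAux.blkD_step m P (e2 _) (e0 _) (cross20 _ hd' (by omega))
      have s1 : DTWAux.blkD (m+1) P (g (t0 ⟨(i:ℕ)+d'+1, by omega⟩)) ≤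
          DTWAux.blkD (m+1) P (g (t1 ⟨(i:ℕ)+d'+1, by omega⟩)) :=
        DTWAux.blkD_mono _ _ (le_of_lt (cross01 _))
      have s2 : DTWAux.blkD (m+1) P (g (t1 ⟨(i:ℕ)+d'+1, by omega⟩)) ≤
          DTWAux.blkD (m+1) P (g (t2 ⟨(i:ℕ)+d'+1, by omega⟩)) :=
        DTWAux.blkD_mono _ _ (le_of_lt (cross12 _))
      have hih := ihd hd'
      have hfe : (⟨(i:ℕ)+(d'+1), hd⟩ : Fin k) = ⟨(i:ℕ)+d'+1, by omega⟩ := Fin.ext (show (i:ℕ)+(d'+1) = (i:ℕ)+d'+1 from rfl)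
      rw [hfe]
      omega
  have hfin : (i:ℕ) + (k - 1 - (i:ℕ)) < k := by omega
  have hcl := claim1 (k - 1 - (i:ℕ)) hfin
  have htop := DTWAux.blkD_top m k P (g (t2 ⟨(i:ℕ)+(k-1-(i:ℕ)), hfin⟩))
    (hglt _ (ht2n _)) hk
  omega
end

section
/- Let z : Σ → Σ be a map on a metric space (Σ, d) such that d(a, z(a)) ≤ l for all a ∈ Σ (e.g., snapping each point to a representative of its part in a partition of diameter l). Let x, y be strings of length at most n over Σ and x̃, ỹ the strings obtained by applying z letterwise. Then dtw(x̃, ỹ) ≥ dtw(x, y) − 4nl. -/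
namespace DTWAux

def exp {α : Type*} (x : List α) (ks : List ℕ) : List α :=
  (List.zipWith (fun a k => List.replicate k a) x ks).flatten

@[simp] lemma exp_nil {α : Type*} (ks : List ℕ) : exp ([] : List α) ks = [] := rfl
@[simp] lemma exp_nil' {α : Type*} (x : List α) : exp x [] = [] := by cases x <;> rfl
@[simp] lemma exp_cons {α : Type*} (a : α) (x : List α) (k : ℕ) (ks : List ℕ) :
    exp (a :: x) (k :: ks) = List.replicate k a ++ exp x ks := rfl

lemma exp_cons_succ {α : Type*} (a : α) (x : List α) (k : ℕ) (ks : List ℕ) :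
    exp (a :: x) ((k+1) :: ks) = a :: exp (a :: x) (k :: ks) := by
  simp [List.replicate_succ]

lemma reduce {α : Type*} : ∀ (N : ℕ) (x y : List α) (ks ms : List ℕ),
    ks.sum + ms.sum ≤ N →
    ks.length = x.length → ms.length = y.length →
    (∀ k ∈ ks, 0 < k) → (∀ m ∈ ms, 0 < m) →
    ks.sum = ms.sum →
    ∃ ks2 ms2 : List ℕ, ks2.length = x.length ∧ ms2.length = y.length ∧
      (∀ k ∈ ks2, 0 < k) ∧ (∀ m ∈ ms2, 0 < m) ∧ ks2.sum = ms2.sum ∧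
      ks2.sum ≤ x.length + y.length ∧
      ((exp x ks2).zip (exp y ms2)).Sublist ((exp x ks).zip (exp y ms)) := by
  intro N
  induction N with
  | zero =>
    intro x y ks ms hN hkl hml hkp hmp hsum
    have hks : ks = [] := by
      cases ks with
      | nil => rfl
      | cons k ks => exfalso; have := hkp k (by simp); simp at hN; omega
    have hms : ms = [] := by
      cases ms with
      | nil => rfl
      | cons m ms => exfalso; have := hmp m (by simp); simp at hN; omega
    subst hks; subst hms
    refine ⟨[], [], by simpa using hkl, by simpa using hml, by simp, by simp, rfl, by simp, by simp⟩
  | succ N ih =>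
    intro x y ks ms hN hkl hml hkp hmp hsum
    cases ks with
    | nil =>
      have hx : x = [] := by simpa using hkl.symm
      have hms : ms = [] := by
        cases ms with
        | nil => rfl
        | cons m ms =>
          have := hmp m (by simp)
          simp at hsum; omega
      subst hx; subst hms
      refine ⟨[], [], rfl, by simpa using hml, by simp, by simp, rfl, by simp, by simp⟩
    | cons k ks =>
      cases ms with
      | nil =>
        have := hkp k (by simp)
        simp at hsum; omega
      | cons m ms =>
        obtain ⟨a, x', rfl⟩ : ∃ a x', x = a :: x' := by
          cases x with
          | nil => simp at hkl
          | cons a x' => exact ⟨a, x', rfl⟩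
        obtain ⟨b, y', rfl⟩ : ∃ b y', y = b :: y' := by
          cases y with
          | nil => simp at hml
          | cons b y' => exact ⟨b, y', rfl⟩
        have hk1 : 0 < k := hkp k (by simp)
        have hm1 : 0 < m := hmp m (by simp)
        -- original pairs head split
        have hsplit : (exp (a::x') (k::ks)).zip (exp (b::y') (m::ms)) =
            (a, b) :: (exp (a::x') ((k-1)::ks)).zip (exp (b::y') ((m-1)::ms)) := by
          obtain ⟨k', rfl⟩ : ∃ k', k = k' + 1 := ⟨k - 1, by omega⟩
          obtain ⟨m', rfl⟩ : ∃ m', m = m' + 1 := ⟨m - 1, by omega⟩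
          rw [exp_cons_succ, exp_cons_succ, List.zip_cons_cons]
          simp
        rcases Nat.lt_or_ge 1 k with hk2 | hk1'
        · rcases Nat.lt_or_ge 1 m with hm2 | hm1'
          · -- k ≥ 2, m ≥ 2 : recurse on (k-1, m-1), drop head pair
            obtain ⟨ks2, ms2, h1, h2, h3, h4, h5, h6, h7⟩ :=
              ih (a::x') (b::y') ((k-1)::ks) ((m-1)::ms)
                (by simp at hN ⊢; omega) (by simpa using hkl) (by simpa using hml)
                (by intro j hj; rcases List.mem_cons.1 hj with rfl | hj; omega; exact hkp _ (by simp [hj]))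
                (by intro j hj; rcases List.mem_cons.1 hj with rfl | hj; omega; exact hmp _ (by simp [hj]))
                (by simp at hsum ⊢; omega)
            exact ⟨ks2, ms2, h1, h2, h3, h4, h5, h6, by rw [hsplit]; exact h7.trans (List.sublist_cons_self _ _)⟩
          · -- k ≥ 2, m = 1 : consume b
            have hm : m = 1 := by omega
            subst hm
            obtain ⟨ks2, ms2, h1, h2, h3, h4, h5, h6, h7⟩ :=
              ih (a::x') y' ((k-1)::ks) ms
                (by simp at hN ⊢; omega) (by simpa using hkl) (by simpa using hml)
                (by intro j hj; rcases List.mem_cons.1 hj with rfl | hj; omega; exact hkp _ (by simp [hj]))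
                (fun j hj => hmp _ (by simp [hj]))
                (by simp at hsum ⊢; omega)
            obtain ⟨k2, ks2', rfl⟩ : ∃ k2 ks2', ks2 = k2 :: ks2' := by
              cases ks2 with
              | nil => simp at h1
              | cons k2 ks2' => exact ⟨k2, ks2', rfl⟩
            refine ⟨(k2+1)::ks2', 1::ms2, by simpa using h1, by simpa using h2, ?_, ?_, ?_, ?_, ?_⟩
            · intro j hj; rcases List.mem_cons.1 hj with rfl | hj; omega; exact h3 _ (by simp [hj])
            · intro j hj; rcases List.mem_cons.1 hj with rfl | hj; omega; exact h4 _ hj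
            · simp at h5 ⊢; omega
            · simp at h6 ⊢; omega
            · rw [hsplit,
                show exp (b::y') ((1-1)::ms) = exp y' ms by simp,
                show exp (a::x') ((k2+1)::ks2') = a :: exp (a::x') (k2::ks2') from
                  exp_cons_succ a x' k2 ks2',
                show exp (b::y') (1::ms2) = b :: exp y' ms2 by simp,
                List.zip_cons_cons]
              exact h7.cons₂ (a, b)
        · -- k = 1
          have hk : k = 1 := by omega
          subst hk
          rcases Nat.lt_or_ge 1 m with hm2 | hm1'
          · -- k = 1, m ≥ 2 : consume a
            obtain ⟨ks2, ms2, h1, h2, h3, h4, h5, h6, h7⟩ :=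
              ih x' (b::y') ks ((m-1)::ms)
                (by simp at hN ⊢; omega) (by simpa using hkl) (by simpa using hml)
                (fun j hj => hkp _ (by simp [hj]))
                (by intro j hj; rcases List.mem_cons.1 hj with rfl | hj; omega; exact hmp _ (by simp [hj]))
                (by simp at hsum ⊢; omega)
            obtain ⟨m2, ms2', rfl⟩ : ∃ m2 ms2', ms2 = m2 :: ms2' := by
              cases ms2 with
              | nil => simp at h2
              | cons m2 ms2' => exact ⟨m2, ms2', rfl⟩
            refine ⟨1::ks2, (m2+1)::ms2', by simpa using h1, by simpa using h2, ?_, ?_, ?_, ?_, ?_⟩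
            · intro j hj; rcases List.mem_cons.1 hj with rfl | hj; omega; exact h3 _ hj
            · intro j hj; rcases List.mem_cons.1 hj with rfl | hj; omega; exact h4 _ (by simp [hj])
            · simp at h5 ⊢; omega
            · simp at h6 ⊢; omega
            · rw [hsplit,
                show exp (a::x') ((1-1)::ks) = exp x' ks by simp,
                show exp (b::y') ((m2+1)::ms2') = b :: exp (b::y') (m2::ms2') from
                  exp_cons_succ b y' m2 ms2',
                show exp (a::x') (1::ks2) = a :: exp x' ks2 by simp,
                List.zip_cons_cons]
              exact h7.cons₂ (a, b)
          · -- k = 1, m = 1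
            have hm : m = 1 := by omega
            subst hm
            obtain ⟨ks2, ms2, h1, h2, h3, h4, h5, h6, h7⟩ :=
              ih x' y' ks ms
                (by simp at hN ⊢; omega) (by simpa using hkl) (by simpa using hml)
                (fun j hj => hkp _ (by simp [hj])) (fun j hj => hmp _ (by simp [hj]))
                (by simp at hsum ⊢; omega)
            refine ⟨1::ks2, 1::ms2, by simpa using h1, by simpa using h2, ?_, ?_, ?_, ?_, ?_⟩
            · intro j hj; rcases List.mem_cons.1 hj with rfl | hj; omega; exact h3 _ hj
            · intro j hj; rcases List.mem_cons.1 hj with rfl | hj; omega; exact h4 _ hj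
            · simp at h5 ⊢; omega
            · simp at h6 ⊢; omega
            · rw [hsplit]
              have hx1 : exp (a::x') (1::ks2) = a :: exp x' ks2 := by simp
              have hy1 : exp (b::y') (1::ms2) = b :: exp y' ms2 := by simp
              have hx0 : exp (a::x') ((1-1)::ks) = exp x' ks := by simp
              have hy0 : exp (b::y') ((1-1)::ms) = exp y' ms := by simp
              rw [hx1, hy1, hx0, hy0, List.zip_cons_cons]
              exact h7.cons₂ (a, b)


lemma exp_length {α : Type*} : ∀ (x : List α) (ks : List ℕ), ks.length = x.length →
    (exp x ks).length = ks.sum := by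
  intro x
  induction x with
  | nil => intro ks h; simp at h; simp [h]
  | cons a x ih =>
    intro ks h
    cases ks with
    | nil => simp at h
    | cons k ks => simp [exp_cons, ih ks (by simpa using h)]

lemma exp_map {α β : Type*} (f : α → β) : ∀ (x : List α) (ks : List ℕ),
    (exp x ks).map f = exp (x.map f) ks := by
  intro x
  induction x with
  | nil => intro ks; simp
  | cons a x ih =>
    intro ks
    cases ks with
    | nil => simp
    | cons k ks => simp [exp_cons, ih ks, List.map_replicate]

lemma sum_map_add_const {α : Type*} (L : List α) (f : α → ℝ) (c : ℝ) :
    (L.map (fun p => f p + c)).sum = (L.map f).sum + L.length * c := by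
  induction L with
  | nil => simp
  | cons a L ih => simp [ih]; ring

end DTWAux

open DTWAux



lemma corrCost_eq_map {α : Type*} (δ : α → α → ℝ) (xb yb : List α) :
    corrCost δ xb yb = ((xb.zip yb).map (fun p => δ p.1 p.2)).sum := by
  rw [corrCost, ← List.map_uncurry_zip_eq_zipWith]; rfl

lemma corrCost_dist_nonneg {σ : Type*} [MetricSpace σ] (xb yb : List σ) :
    0 ≤ corrCost dist xb yb := by
  rw [corrCost_eq_map]
  apply List.sum_nonneg
  intro r hr
  obtain ⟨p, _, rfl⟩ := List.mem_map.1 hr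
  exact dist_nonneg

/-- Snapping each point to a representative at distance at most l decreases DTW by at
most 4nl for strings of length at most n. -/
theorem dtw_snap_lower {σ : Type*} [MetricSpace σ] (z : σ → σ) (l : ℝ) (hl : 0 ≤ l)
    (hz : ∀ a, dist a (z a) ≤ l) (n : ℕ) (x y : List σ)
    (hx : x.length ≤ n) (hy : y.length ≤ n) :
    dtw dist x y - 4 * n * l ≤ dtw dist (x.map z) (y.map z) := by
  classical
  have hbdd : BddBelow {c | ∃ xb yb, IsCorrespondence x y xb yb ∧ c = corrCost dist xb yb} := by
    refine ⟨0, ?_⟩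
    rintro c ⟨xb, yb, -, rfl⟩
    exact corrCost_dist_nonneg xb yb
  have h4nl : (0:ℝ) ≤ 4 * n * l := by positivity
  by_cases hT : {c | ∃ xb yb, IsCorrespondence (x.map z) (y.map z) xb yb ∧
      c = corrCost dist xb yb}.Nonempty
  · conv_rhs => rw [dtw]
    refine le_csInf hT ?_
    rintro c ⟨ub, vb, ⟨⟨ks, hksl, hksp, rfl⟩, ⟨ms, hmsl, hmsp, rfl⟩, hlen⟩, rfl⟩
    -- rewrite the expansions of the mapped strings as maps of expansions
    have hksl' : ks.length = x.length := by simpa using hksl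
    have hmsl' : ms.length = y.length := by simpa using hmsl
    have hub : (List.zipWith (fun a k => List.replicate k a) (x.map z) ks).flatten
        = (exp x ks).map z := (exp_map z x ks).symm
    have hvb : (List.zipWith (fun a k => List.replicate k a) (y.map z) ms).flatten
        = (exp y ms).map z := (exp_map z y ms).symm
    have hsum : ks.sum = ms.sum := by
      have h1 := exp_length (x.map z) ks (by simpa using hksl)
      have h2 := exp_length (y.map z) ms (by simpa using hmsl)
      rw [show exp (x.map z) ks
          = (List.zipWith (fun a k => List.replicate k a) (x.map z) ks).flatten from rfl] at h1
      rw [show exp (y.map z) ms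
          = (List.zipWith (fun a k => List.replicate k a) (y.map z) ms).flatten from rfl] at h2
      rw [← h1, ← h2, hlen]
    obtain ⟨ks2, ms2, h1, h2, h3, h4, h5, h6, h7⟩ :=
      reduce (ks.sum + ms.sum) x y ks ms le_rfl hksl' hmsl' hksp hmsp hsum
    -- dtw x y is at most the cost of the reduced correspondence
    have hdtw_le : dtw dist x y ≤ corrCost dist (exp x ks2) (exp y ms2) := by
      refine csInf_le hbdd ⟨exp x ks2, exp y ms2, ⟨⟨ks2, h1, h3, rfl⟩, ⟨ms2, h2, h4, rfl⟩, ?_⟩, rfl⟩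
      rw [exp_length x ks2 h1, exp_length y ms2 h2, h5]
    set P2 := (exp x ks2).zip (exp y ms2) with hP2
    set P := (exp x ks).zip (exp y ms) with hP
    have hstep1 : corrCost dist (exp x ks2) (exp y ms2)
        ≤ (P2.map (fun p => dist (z p.1) (z p.2))).sum + P2.length * (2 * l) := by
      rw [corrCost_eq_map, ← sum_map_add_const P2 (fun p => dist (z p.1) (z p.2)) (2 * l)]
      apply List.sum_le_sum
      intro p _
      have t4 := dist_triangle4 p.1 (z p.1) (z p.2) p.2
      have h1' := hz p.1
      have h2' := hz p.2
      rw [dist_comm (z p.2) p.2] at t4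
      linarith
    have hstep3 : (P2.map (fun p => dist (z p.1) (z p.2))).sum
        ≤ (P.map (fun p => dist (z p.1) (z p.2))).sum := by
      refine (h7.map _).sum_le_sum ?_
      intro r hr
      obtain ⟨p, _, rfl⟩ := List.mem_map.1 hr
      exact dist_nonneg
    have hstep4 : (P.map (fun p => dist (z p.1) (z p.2))).sum
        = corrCost dist ((exp x ks).map z) ((exp y ms).map z) := by
      rw [corrCost_eq_map, List.zip_map, List.map_map]
      rfl
    have hP2len : (P2.length : ℝ) * (2 * l) ≤ 4 * n * l := by
      have hlen2 : P2.length = ks2.sum := by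
        rw [hP2, List.length_zip, exp_length x ks2 h1, exp_length y ms2 h2, h5, min_self]
      have hle : (P2.length : ℝ) ≤ 2 * n := by
        rw [hlen2]
        have : ks2.sum ≤ 2 * n := by omega
        exact_mod_cast this
      nlinarith
    have hchain : dtw dist x y
        ≤ corrCost dist ((exp x ks).map z) ((exp y ms).map z) + 4 * n * l := by
      linarith [hdtw_le, hstep1, hstep3, hstep4, hP2len]
    rw [hub, hvb]
    linarith
  · -- no correspondence exists; both dtw values are 0
    have hS : {c | ∃ xb yb, IsCorrespondence x y xb yb ∧ c = corrCost dist xb yb} = ∅ := by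
      rw [Set.eq_empty_iff_forall_notMem]
      rintro c ⟨xb, yb, ⟨⟨ks, hksl, hksp, rfl⟩, ⟨ms, hmsl, hmsp, rfl⟩, hlen⟩, rfl⟩
      apply hT
      refine ⟨corrCost dist ((exp x ks).map z) ((exp y ms).map z),
        (exp x ks).map z, (exp y ms).map z,
        ⟨⟨ks, by simpa using hksl, hksp, ?_⟩, ⟨ms, by simpa using hmsl, hmsp, ?_⟩, ?_⟩, rfl⟩
      · rw [exp_map]; rfl
      · rw [exp_map]; rfl
      · rw [List.length_map, List.length_map]; exact hlen
    have hTe : {c | ∃ xb yb, IsCorrespondence (x.map z) (y.map z) xb yb ∧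
        c = corrCost dist xb yb} = ∅ := Set.not_nonempty_iff_eq_empty.mp hT
    rw [dtw, dtw, hS, hTe, Real.sInf_empty]
    linarith
end

section
/- Let z : Σ → Σ be a map on a metric space (Σ, d) with d(a, z(a)) ≤ l for all a. Let x, y be strings over Σ and x̃, ỹ their letterwise images under z. Then dtw(x̃, ỹ) ≤ dtw(x, y) + 2l · m, where m is the number of edges in some optimal correspondence for (x, y) whose endpoints are mapped to distinct points by z; in particular dtw(x̃, ỹ) ≤ dtw(x, y) + 2l · dtw_0(x̃', ỹ') where (x̃', ỹ') is the image of that optimal correspondence. -/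
lemma isExpansion_map {α β : Type*} (f : α → β) {x xb : List α} (h : IsExpansion x xb) :
    IsExpansion (x.map f) (xb.map f) := by
  obtain ⟨ks, hlen, hpos, hxb⟩ := h
  refine ⟨ks, by simpa using hlen, hpos, ?_⟩
  subst hxb
  simp [List.map_flatten, List.map_zipWith, List.zipWith_map_left, List.map_replicate]

lemma zipWith_dist_nonneg {σ : Type*} [MetricSpace σ] (a b : List σ) :
    0 ≤ (List.zipWith dist a b).sum := by
  induction a generalizing b with
  | nil => simp
  | cons u us ih =>
    cases b with
    | nil => simp
    | cons v vs =>
      simp only [List.zipWith_cons_cons, List.sum_cons]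
      have := ih vs
      have := dist_nonneg (x := u) (y := v)
      linarith

lemma snap_cost {σ : Type*} [MetricSpace σ] [DecidableEq σ] (z : σ → σ) (l : ℝ)
    (hz : ∀ a, dist a (z a) ≤ l) :
    ∀ (xb yb : List σ),
      (List.zipWith dist (xb.map z) (yb.map z)).sum ≤
        (List.zipWith dist xb yb).sum +
          2 * l * (List.zipWith (fun a b => if z a = z b then (0 : ℝ) else 1) xb yb).sum
  | [], ys => by simp
  | a :: xs, [] => by simp
  | a :: xs, b :: ys => by
    have ih := snap_cost z l hz xs ys
    simp only [List.map_cons, List.zipWith_cons_cons, List.sum_cons]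
    by_cases h : z a = z b
    · have h1 : dist (z a) (z b) = 0 := by rw [h, dist_self]
      rw [h1, if_pos h]
      have := dist_nonneg (x := a) (y := b)
      nlinarith [ih]
    · rw [if_neg h]
      have h2 : dist (z a) (z b) ≤ dist a b + 2 * l := by
        have t1 := dist_triangle (z a) a (z b)
        have t2 := dist_triangle a b (z b)
        have := hz a
        have := hz b
        have e1 : dist (z a) a = dist a (z a) := dist_comm _ _
        have e2 : dist (z b) b = dist b (z b) := dist_comm _ _
        linarith
      nlinarith [ih]

/-- Snapping each point to a representative at distance at most l increases DTW by at
most 2l·m, where m is the number of edges of an optimal correspondence for (x, y)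
whose endpoints are mapped to distinct points by z. -/
theorem dtw_snap_upper {σ : Type*} [MetricSpace σ] [DecidableEq σ] (z : σ → σ) (l : ℝ)
    (hz : ∀ a, dist a (z a) ≤ l) (x y xb yb : List σ)
    (hc : IsCorrespondence x y xb yb)
    (hopt : corrCost dist xb yb = dtw dist x y) :
    dtw dist (x.map z) (y.map z) ≤
      dtw dist x y +
        2 * l * ((List.zipWith (fun a b => if z a = z b then (0 : ℝ) else 1) xb yb).sum) := by
  obtain ⟨hex, hey, hlen⟩ := hc
  have hcorr : IsCorrespondence (x.map z) (y.map z) (xb.map z) (yb.map z) :=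
    ⟨isExpansion_map z hex, isExpansion_map z hey, by simpa using hlen⟩
  have hmem : corrCost dist (xb.map z) (yb.map z) ∈
      {c | ∃ a b, IsCorrespondence (x.map z) (y.map z) a b ∧ c = corrCost dist a b} :=
    ⟨xb.map z, yb.map z, hcorr, rfl⟩
  have hbdd : BddBelow {c | ∃ a b, IsCorrespondence (x.map z) (y.map z) a b ∧
      c = corrCost dist a b} := by
    refine ⟨0, fun c hc => ?_⟩
    obtain ⟨a, b, _, rfl⟩ := hc
    exact zipWith_dist_nonneg a b
  have h1 : dtw dist (x.map z) (y.map z) ≤ corrCost dist (xb.map z) (yb.map z) :=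
    csInf_le hbdd hmem
  calc dtw dist (x.map z) (y.map z) ≤ corrCost dist (xb.map z) (yb.map z) := h1
    _ ≤ corrCost dist xb yb +
        2 * l * (List.zipWith (fun a b => if z a = z b then (0 : ℝ) else 1) xb yb).sum :=
      snap_cost z l hz xb yb
    _ = _ := by rw [hopt]
end
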